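/- Let T > 0, let a ∈ L¹([0,T]) be not almost everywhere zero, and let g : [0,∞) → [0,∞) be continuous with g(0) = 0 and g(s) > 0 for all s > 0, continuously differentiable on (0,∞) with g'(s) > 0 for all s > 0. If the equation u'' + a(x) g(u) = 0 on [0,T] has a positive solution satisfying either the Neumann boundary conditions or the periodic boundary conditions, then ∫₀ᵀ a(x) dx < 0. -/

import Mathlib

open MeasureTheory Set Filter

/-- `u` (with derivative `u'`) is a C¹ solution of `u'' + f(x) = 0` on `[0,T]`:
`u'` is absolutely continuous and the equation holds a.e., expressed via the
integral equation `u'(x) = u'(0) − ∫₀ˣ f(t) dt`. -/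
def IsSolOn (T : ℝ) (f : ℝ → ℝ) (u u' : ℝ → ℝ) : Prop :=
  (∀ x ∈ Icc (0:ℝ) T, HasDerivWithinAt u (u' x) (Icc (0:ℝ) T) x) ∧
  ContinuousOn u' (Icc (0:ℝ) T) ∧
  ∀ x ∈ Icc (0:ℝ) T, u' x = u' 0 - ∫ t in (0:ℝ)..x, f t

/-- The equation `u'' + a(x) g(u) = 0` on `[0,T]` has a positive solution
satisfying the Neumann boundary conditions. -/
def PosSolNeumann (T : ℝ) (a g : ℝ → ℝ) : Prop :=
  ∃ u u' : ℝ → ℝ, IsSolOn T (fun t => a t * g (u t)) u u' ∧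
    (∀ x ∈ Icc (0:ℝ) T, 0 < u x) ∧ u' 0 = 0 ∧ u' T = 0

/-- The equation `u'' + a(x) g(u) = 0` on `[0,T]` has a positive solution
satisfying the periodic boundary conditions. -/
def PosSolPeriodic (T : ℝ) (a g : ℝ → ℝ) : Prop :=
  ∃ u u' : ℝ → ℝ, IsSolOn T (fun t => a t * g (u t)) u u' ∧
    (∀ x ∈ Icc (0:ℝ) T, 0 < u x) ∧ u 0 = u T ∧ u' 0 = u' T

/-- Condition (g1): `g : [0,∞) → [0,∞)` is continuous, `g 0 = 0`, `g > 0` on `(0,∞)`. -/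
def CondG1 (g : ℝ → ℝ) : Prop :=
  ContinuousOn g (Ici (0:ℝ)) ∧ (∀ s : ℝ, 0 ≤ s → 0 ≤ g s) ∧ g 0 = 0 ∧
    ∀ s : ℝ, 0 < s → 0 < g s

/-- `g` is regularly oscillating at zero. -/
def RegOscAtZero (g : ℝ → ℝ) : Prop :=
  ∀ ε : ℝ, 0 < ε → ∃ δ > (0:ℝ), ∃ η > (0:ℝ), ∀ s ω : ℝ,
    0 < s → s < δ → |ω - 1| < η → |g (ω * s) / g s - 1| < ε

/-- `liminf_{s → +∞} g(s)/s`, computed in `EReal`. -/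
noncomputable def GrowthLiminf (g : ℝ → ℝ) : EReal :=
  liminf (fun s : ℝ => ((g s / s : ℝ) : EReal)) atTop

/-- `limsup_{s → +∞} g(s)/s`, computed in `EReal`. -/
noncomputable def GrowthLimsup (g : ℝ → ℝ) : EReal :=
  limsup (fun s : ℝ => ((g s / s : ℝ) : EReal)) atTop

open scoped ENNReal

lemma aux_lintegral_eq {α : Type*} [MeasurableSpace α] {ν : Measure α} {a : α → ℝ}
    (ha : Integrable a ν) (h0 : ∫ x, a x ∂ν = 0) :
    ∫⁻ x, ENNReal.ofReal (a x) ∂ν = ∫⁻ x, ENNReal.ofReal (-a x) ∂ν := by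
  have hfin : ∀ b : α → ℝ, (∀ x, b x = a x ∨ b x = -a x) →
      ∫⁻ x, ENNReal.ofReal (b x) ∂ν ≠ ∞ := by
    intro b hb
    have : ∫⁻ x, ENNReal.ofReal (b x) ∂ν ≤ ∫⁻ x, ‖a x‖₊ ∂ν := by
      refine lintegral_mono fun x => ?_
      rcases hb x with h | h <;> rw [h]
      · exact (ENNReal.ofReal_le_ofReal (le_abs_self _)).trans
          (by rw [← Real.norm_eq_abs]; exact (ofReal_norm _).le)
      · exact (ENNReal.ofReal_le_ofReal (neg_le_abs _)).trans
          (by rw [← Real.norm_eq_abs]; exact (ofReal_norm _).le)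
    exact (this.trans_lt ha.2).ne
  have h := integral_eq_lintegral_pos_part_sub_lintegral_neg_part ha
  rw [h0] at h
  have h2 := sub_eq_zero.mp h.symm
  exact (ENNReal.toReal_eq_toReal_iff' (hfin a (fun x => Or.inl rfl))
    (hfin (fun x => -a x) (fun x => Or.inr rfl))).mp h2

lemma aux_ae_zero (T : ℝ) (hT : 0 ≤ T) (a : ℝ → ℝ) (ha : IntegrableOn a (Ioc 0 T))
    (h : ∀ x ∈ Icc (0:ℝ) T, (∫ t in (0:ℝ)..x, a t) = 0) :
    ∀ᵐ x ∂(volume.restrict (Icc (0:ℝ) T)), a x = 0 := by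
  set μ : Measure ℝ := volume.restrict (Ioc 0 T) with hμ
  have hignore : (volume : Measure ℝ).restrict (Icc (0:ℝ) T) = μ :=
    (Measure.restrict_congr_set Ioc_ae_eq_Icc).symm
  rw [hignore]
  have haμ : Integrable a μ := ha
  -- set integrals over subintervals vanish
  have hsub : ∀ x y : ℝ, ∫ t in Ioc x y, a t ∂μ = 0 := by
    intro x y
    rw [hμ, Measure.restrict_restrict measurableSet_Ioc, Ioc_inter_Ioc]
    rcases le_or_gt (max x 0) (min y T) with hle | hlt
    · have h0m : (0:ℝ) ≤ max x 0 := le_max_right _ _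
      have hMT : min y T ≤ T := min_le_right _ _
      have hm : max x 0 ∈ Icc (0:ℝ) T := ⟨h0m, hle.trans hMT⟩
      have hM : min y T ∈ Icc (0:ℝ) T := ⟨h0m.trans hle, hMT⟩
      have hiM : IntervalIntegrable a volume 0 (min y T) :=
        (intervalIntegrable_iff_integrableOn_Ioc_of_le hM.1).mpr
          (ha.mono_set (Ioc_subset_Ioc le_rfl hM.2))
      have him : IntervalIntegrable a volume 0 (max x 0) :=
        (intervalIntegrable_iff_integrableOn_Ioc_of_le hm.1).mpr
          (ha.mono_set (Ioc_subset_Ioc le_rfl hm.2))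
      have := intervalIntegral.integral_interval_sub_left hiM him
      rw [← intervalIntegral.integral_of_le hle, ← this, h _ hM, h _ hm, sub_zero]
    · rw [Ioc_eq_empty (not_lt.mpr hlt.le), Measure.restrict_empty, integral_zero_measure]
  -- with-density measures
  haveI : IsFiniteMeasure μ := by
    rw [hμ]; exact ⟨by rw [Measure.restrict_apply_univ]; exact measure_Ioc_lt_top⟩
  have hma : AEMeasurable (fun x => ENNReal.ofReal (a x)) μ :=
    ENNReal.measurable_ofReal.comp_aemeasurable haμ.aemeasurable
  have hmna : AEMeasurable (fun x => ENNReal.ofReal (-a x)) μ :=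
    ENNReal.measurable_ofReal.comp_aemeasurable haμ.neg.aemeasurable
  have hfin : ∫⁻ x, ENNReal.ofReal (a x) ∂μ ≠ ∞ := by
    have : ∫⁻ x, ENNReal.ofReal (a x) ∂μ ≤ ∫⁻ x, ‖a x‖₊ ∂μ := by
      refine lintegral_mono fun x => ?_
      exact (ENNReal.ofReal_le_ofReal (le_abs_self _)).trans
        (by rw [← Real.norm_eq_abs]; exact (ofReal_norm _).le)
    exact (this.trans_lt haμ.2).ne
  haveI : IsFiniteMeasure (μ.withDensity (fun x => ENNReal.ofReal (a x))) :=
    isFiniteMeasure_withDensity hfin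
  have heqm : μ.withDensity (fun x => ENNReal.ofReal (a x)) =
      μ.withDensity (fun x => ENNReal.ofReal (-a x)) := by
    refine Measure.ext_of_Ioc _ _ fun x y hxy => ?_
    rw [withDensity_apply _ measurableSet_Ioc, withDensity_apply _ measurableSet_Ioc]
    exact aux_lintegral_eq (haμ.restrict) (hsub x y)
  have hae := (withDensity_eq_iff hma hmna hfin).mp heqm
  filter_upwards [hae] with x hx
  by_contra hne
  rcases lt_or_gt_of_ne hne with hlt | hgt
  · have h1 : ENNReal.ofReal (a x) = 0 := by simp [ENNReal.ofReal_eq_zero.mpr hlt.le]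
    have h2 : ENNReal.ofReal (-a x) ≠ 0 := by
      simp only [ne_eq, ENNReal.ofReal_eq_zero, not_le]; linarith
    exact h2 (h1 ▸ hx : (0:ℝ≥0∞) = _).symm
  · have h1 : ENNReal.ofReal (-a x) = 0 := by
      simp [ENNReal.ofReal_eq_zero.mpr (by linarith : -a x ≤ 0)]
    have h2 : ENNReal.ofReal (a x) ≠ 0 := by
      simp only [ne_eq, ENNReal.ofReal_eq_zero, not_le]; linarith
    exact h2 (hx.trans h1)

lemma aux_swap (T : ℝ) (hT : 0 ≤ T) (f p : ℝ → ℝ)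
    (hf : IntegrableOn f (Ioc 0 T)) (hp : ContinuousOn p (Icc 0 T)) :
    (∫ x in (0:ℝ)..T, f x * (∫ t in x..T, p t)) =
      ∫ t in (0:ℝ)..T, (∫ x in (0:ℝ)..t, f x) * p t := by
  set μ : Measure ℝ := volume.restrict (Ioc 0 T) with hμ
  have hp_int : Integrable p μ :=
    (hp.integrableOn_Icc).mono_set Ioc_subset_Icc_self
  have hf_int : Integrable f μ := hf
  set H : ℝ → ℝ → ℝ := fun x t => if x < t then f x * p t else 0 with hH
  have hHint : Integrable (Function.uncurry H) (μ.prod μ) := by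
    have heq : Function.uncurry H =
        Set.indicator {z : ℝ × ℝ | z.1 < z.2} (fun z => f z.1 * p z.2) := by
      funext z
      by_cases h : z.1 < z.2
      · simp [Function.uncurry, hH, h, Set.indicator_of_mem, mem_setOf_eq]
      · simp [Function.uncurry, hH, h, Set.indicator_of_notMem, mem_setOf_eq]
    rw [heq]
    exact (hf_int.mul_prod hp_int).indicator (measurableSet_lt measurable_fst measurable_snd)
  have hswap := integral_integral_swap (f := H) hHint
  have hL : (∫ x in (0:ℝ)..T, f x * (∫ t in x..T, p t)) = ∫ x, ∫ t, H x t ∂μ ∂μ := by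
    rw [intervalIntegral.integral_of_le hT]
    refine setIntegral_congr_fun measurableSet_Ioc fun x hx => ?_
    have h1 : (fun t => H x t) = (Ioi x).indicator (fun t => f x * p t) := by
      funext t
      by_cases h : x < t
      · simp [hH, h, Set.indicator_of_mem, mem_Ioi]
      · simp [hH, h, Set.indicator_of_notMem, mem_Ioi]
    rw [h1, hμ, setIntegral_indicator measurableSet_Ioi]
    have h2 : Ioc 0 T ∩ Ioi x = Ioc x T := by
      rw [Ioc_inter_Ioi, max_eq_right hx.1.le]
    rw [h2, integral_const_mul, ← intervalIntegral.integral_of_le hx.2]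
  have hR : (∫ t in (0:ℝ)..T, (∫ x in (0:ℝ)..t, f x) * p t) = ∫ t, ∫ x, H x t ∂μ ∂μ := by
    rw [intervalIntegral.integral_of_le hT]
    refine setIntegral_congr_fun measurableSet_Ioc fun t ht => ?_
    have h1 : (fun x => H x t) = (Iio t).indicator (fun x => f x * p t) := by
      funext x
      by_cases h : x < t
      · simp [hH, h, Set.indicator_of_mem, mem_Iio]
      · simp [hH, h, Set.indicator_of_notMem, mem_Iio]
    rw [h1, hμ, setIntegral_indicator measurableSet_Iio]
    have h2 : Ioc 0 T ∩ Iio t = Ioo 0 t := by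
      ext y
      simp only [mem_inter_iff, mem_Ioc, mem_Iio, mem_Ioo]
      exact ⟨fun h => ⟨h.1.1, h.2⟩, fun h => ⟨⟨h.1, (h.2.le.trans ht.2)⟩, h.2⟩⟩
    rw [h2, integral_mul_const, ← integral_Ioc_eq_integral_Ioo,
      ← intervalIntegral.integral_of_le ht.1.le]
  rw [hL, hR]
  exact hswap

lemma aux_key (T : ℝ) (hT : 0 < T)
    (a : ℝ → ℝ) (ha : IntervalIntegrable a volume 0 T)
    (ha0 : ¬ (∀ᵐ x ∂(volume.restrict (Icc (0:ℝ) T)), a x = 0))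
    (g g' : ℝ → ℝ) (hg1 : CondG1 g)
    (hgd : ∀ s : ℝ, 0 < s → HasDerivAt g (g' s) s)
    (hgdc : ContinuousOn g' (Ioi (0:ℝ)))
    (hgdpos : ∀ s : ℝ, 0 < s → 0 < g' s)
    (u u' : ℝ → ℝ) (hsol : IsSolOn T (fun t => a t * g (u t)) u u')
    (hpos : ∀ x ∈ Icc (0:ℝ) T, 0 < u x)
    (hbc : u' 0 * (g (u 0))⁻¹ = u' T * (g (u T))⁻¹) :
    (∫ x in (0:ℝ)..T, a x) < 0 := by
  obtain ⟨hder, hu'c, heq⟩ := hsol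
  set f : ℝ → ℝ := fun t => a t * g (u t) with hf_def
  have h0T : (0:ℝ) ∈ Icc (0:ℝ) T := ⟨le_rfl, hT.le⟩
  have hTT : T ∈ Icc (0:ℝ) T := ⟨hT.le, le_rfl⟩
  have hu_cont : ContinuousOn u (Icc (0:ℝ) T) :=
    fun x hx => (hder x hx).continuousWithinAt
  have hGu_cont : ContinuousOn (fun x => g (u x)) (Icc (0:ℝ) T) :=
    hg1.1.comp hu_cont (fun x hx => (hpos x hx).le)
  have hGu_pos : ∀ x ∈ Icc (0:ℝ) T, 0 < g (u x) :=
    fun x hx => hg1.2.2.2 _ (hpos x hx)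
  set w : ℝ → ℝ := fun x => (g (u x))⁻¹ with hw_def
  set p : ℝ → ℝ := fun x => g' (u x) * u' x / (g (u x)) ^ 2 with hp_def
  have hw_deriv : ∀ x ∈ Icc (0:ℝ) T, HasDerivWithinAt w (-(p x)) (Icc (0:ℝ) T) x := by
    intro x hx
    have hgu : HasDerivWithinAt (fun y => g (u y)) (g' (u x) * u' x) (Icc (0:ℝ) T) x :=
      (hgd (u x) (hpos x hx)).comp_hasDerivWithinAt x (hder x hx)
    have := hgu.fun_inv (ne_of_gt (hGu_pos x hx))
    simpa [hw_def, hp_def, neg_div] using this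
  have hw_cont : ContinuousOn w (Icc (0:ℝ) T) :=
    hGu_cont.inv₀ (fun x hx => ne_of_gt (hGu_pos x hx))
  have hp_cont : ContinuousOn p (Icc (0:ℝ) T) := by
    refine ContinuousOn.div ((hgdc.comp hu_cont (fun x hx => hpos x hx)).mul hu'c)
      (hGu_cont.pow 2) (fun x hx => pow_ne_zero 2 (ne_of_gt (hGu_pos x hx)))
  -- FTC helper
  have hFTC : ∀ (vf vd : ℝ → ℝ),
      (∀ y ∈ Icc (0:ℝ) T, HasDerivWithinAt vf (vd y) (Icc (0:ℝ) T) y) →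
      ContinuousOn vd (Icc (0:ℝ) T) →
      ∀ x₁ ∈ Icc (0:ℝ) T, ∀ x₂ ∈ Icc (0:ℝ) T, x₁ ≤ x₂ →
        (∫ y in x₁..x₂, vd y) = vf x₂ - vf x₁ := by
    intro vf vd hd hc x₁ hx₁ x₂ hx₂ h12
    apply intervalIntegral.integral_eq_sub_of_hasDeriv_right_of_le h12
    · have hcv : ContinuousOn vf (Icc (0:ℝ) T) := fun y hy => (hd y hy).continuousWithinAt
      exact hcv.mono (Icc_subset_Icc hx₁.1 hx₂.2)
    · intro y hy
      have hy' : y ∈ Icc (0:ℝ) T := ⟨hx₁.1.trans hy.1.le, hy.2.le.trans hx₂.2⟩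
      have hnh : Icc (0:ℝ) T ∈ nhds y :=
        Icc_mem_nhds (lt_of_le_of_lt hx₁.1 hy.1) (lt_of_lt_of_le hy.2 hx₂.2)
      exact ((hd y hy').hasDerivAt hnh).hasDerivWithinAt
    · exact (hc.mono (Icc_subset_Icc hx₁.1 hx₂.2)).intervalIntegrable_of_Icc h12
  have hwx : ∀ x ∈ Icc (0:ℝ) T, (∫ t in x..T, p t) = w x - w T := by
    intro x hx
    have := hFTC w (fun y => -(p y)) hw_deriv hp_cont.neg x hx T hTT hx.2
    rw [intervalIntegral.integral_neg] at this
    linarith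
  have hf_int : IntervalIntegrable f volume 0 T :=
    ha.mul_continuousOn (by rw [uIcc_of_le hT.le]; exact hGu_cont)
  have hf_int' : IntegrableOn f (Ioc 0 T) :=
    (intervalIntegrable_iff_integrableOn_Ioc_of_le hT.le).mp hf_int
  have hFt : ∀ t ∈ Icc (0:ℝ) T, (∫ x in (0:ℝ)..t, f x) = u' 0 - u' t := by
    intro t ht
    have := heq t ht
    linarith
  -- main computation
  set q : ℝ → ℝ := fun t => u' t * p t with hq_def
  have hq_eq : ∀ t, q t = g' (u t) * (u' t) ^ 2 / (g (u t)) ^ 2 := by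
    intro t; simp only [hq_def, hp_def]; ring
  have hq_nonneg : ∀ t ∈ Icc (0:ℝ) T, 0 ≤ q t := by
    intro t ht
    rw [hq_eq]
    exact div_nonneg (mul_nonneg (hgdpos _ (hpos t ht)).le (sq_nonneg _)) (sq_nonneg _)
  have hq_cont : ContinuousOn q (Icc (0:ℝ) T) := hu'c.mul hp_cont
  have hq_int : IntervalIntegrable q volume 0 T := hq_cont.intervalIntegrable_of_Icc hT.le
  have hp_int : IntervalIntegrable p volume 0 T := hp_cont.intervalIntegrable_of_Icc hT.le
  have hu'p_int : IntervalIntegrable (fun t => u' t * p t) volume 0 T := hq_int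
  have step1 : (∫ x in (0:ℝ)..T, a x) = ∫ x in (0:ℝ)..T, f x * w x := by
    apply intervalIntegral.integral_congr
    intro x hx
    rw [uIcc_of_le hT.le] at hx
    rw [hf_def, hw_def]
    field_simp [ne_of_gt (hGu_pos x hx)]
  have step2 : (∫ x in (0:ℝ)..T, f x * w x)
      = (∫ x in (0:ℝ)..T, f x * (w x - w T)) + (∫ x in (0:ℝ)..T, f x * w T) := by
    rw [← intervalIntegral.integral_add
      (hf_int.mul_continuousOn (by rw [uIcc_of_le hT.le]; exact hw_cont.sub continuousOn_const))
      (hf_int.mul_continuousOn (by rw [uIcc_of_le hT.le]; exact continuousOn_const))]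
    apply intervalIntegral.integral_congr
    intro x hx
    ring
  have step3 : (∫ x in (0:ℝ)..T, f x * (w x - w T))
      = ∫ x in (0:ℝ)..T, f x * (∫ t in x..T, p t) := by
    apply intervalIntegral.integral_congr
    intro x hx
    rw [uIcc_of_le hT.le] at hx
    show f x * (w x - w T) = f x * ∫ t in x..T, p t
    rw [hwx x hx]
  have step4 : (∫ x in (0:ℝ)..T, f x * (∫ t in x..T, p t))
      = ∫ t in (0:ℝ)..T, (∫ x in (0:ℝ)..t, f x) * p t :=
    aux_swap T hT.le f p hf_int' hp_cont
  have step5 : (∫ t in (0:ℝ)..T, (∫ x in (0:ℝ)..t, f x) * p t)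
      = ∫ t in (0:ℝ)..T, (u' 0 * p t - u' t * p t) := by
    apply intervalIntegral.integral_congr
    intro t ht
    rw [uIcc_of_le hT.le] at ht
    show (∫ x in (0:ℝ)..t, f x) * p t = u' 0 * p t - u' t * p t
    rw [hFt t ht]
    ring
  have step6 : (∫ t in (0:ℝ)..T, (u' 0 * p t - u' t * p t))
      = u' 0 * (∫ t in (0:ℝ)..T, p t) - ∫ t in (0:ℝ)..T, u' t * p t := by
    rw [intervalIntegral.integral_sub (hp_int.const_mul _) hu'p_int,
      intervalIntegral.integral_const_mul]
  have hpint_eq : (∫ t in (0:ℝ)..T, p t) = w 0 - w T := hwx 0 h0T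
  have hfT : (∫ x in (0:ℝ)..T, f x) = u' 0 - u' T := hFt T hTT
  have hlast : (∫ x in (0:ℝ)..T, f x * w T) = (u' 0 - u' T) * w T := by
    rw [intervalIntegral.integral_mul_const, hfT]
  have hmain : (∫ x in (0:ℝ)..T, a x) = - ∫ t in (0:ℝ)..T, q t := by
    rw [step1, step2, step3, step4, step5, step6, hpint_eq, hlast]
    have : u' 0 * w 0 = u' T * w T := hbc
    simp only [hq_def]
    ring_nf
    nlinarith [this]
  have hqint_nonneg : 0 ≤ ∫ t in (0:ℝ)..T, q t :=
    intervalIntegral.integral_nonneg hT.le hq_nonneg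
  rcases hqint_nonneg.lt_or_eq with hlt | heq0
  · rw [hmain]; linarith
  -- degenerate case : ∫ q = 0
  exfalso
  have hqae : q =ᵐ[volume.restrict (Ioc (0:ℝ) T)] 0 := by
    refine (intervalIntegral.integral_eq_zero_iff_of_le_of_nonneg_ae hT.le ?_ hq_int).mp
      heq0.symm
    filter_upwards [ae_restrict_mem measurableSet_Ioc] with t ht
    exact hq_nonneg t (Ioc_subset_Icc_self ht)
  have hu'ae : u' =ᵐ[volume.restrict (Ioc (0:ℝ) T)] 0 := by
    filter_upwards [hqae, ae_restrict_mem measurableSet_Ioc] with t h1 h2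
    by_contra hne
    have ht' : t ∈ Icc (0:ℝ) T := Ioc_subset_Icc_self h2
    have hposq : 0 < q t := by
      rw [hq_eq]
      exact div_pos (mul_pos (hgdpos _ (hpos t ht')) (sq_pos_of_ne_zero hne))
        (sq_pos_of_ne_zero (ne_of_gt (hGu_pos t ht')))
    rw [h1] at hposq
    exact lt_irrefl _ hposq
  have hu_const : ∀ x ∈ Icc (0:ℝ) T, u x = u 0 := by
    intro x hx
    have hFTCu := hFTC u u' hder hu'c 0 h0T x hx hx.1
    have hzero : (∫ y in (0:ℝ)..x, u' y) = 0 := by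
      rw [intervalIntegral.integral_of_le hx.1]
      have hae : u' =ᵐ[volume.restrict (Ioc (0:ℝ) x)] 0 :=
        ae_restrict_of_ae_restrict_of_subset (Ioc_subset_Ioc le_rfl hx.2) hu'ae
      rw [integral_congr_ae hae]
      simp
    rw [hzero] at hFTCu
    linarith
  have hu'_zero : ∀ x ∈ Icc (0:ℝ) T, u' x = 0 := by
    intro x hx
    have h1 : HasDerivWithinAt u 0 (Icc (0:ℝ) T) x :=
      (hasDerivWithinAt_const x (Icc (0:ℝ) T) (u 0)).congr
        (fun y hy => hu_const y hy) (hu_const x hx)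
    have hud : UniqueDiffWithinAt ℝ (Icc (0:ℝ) T) x := (uniqueDiffOn_Icc hT) x hx
    rw [← (hder x hx).derivWithin hud]
    exact h1.derivWithin hud
  have hfa : ∀ x ∈ Icc (0:ℝ) T, (∫ t in (0:ℝ)..x, a t) = 0 := by
    intro x hx
    have h0 := heq x hx
    rw [hu'_zero x hx, hu'_zero 0 h0T] at h0
    have hfx : (∫ t in (0:ℝ)..x, f t) = 0 := by linarith
    have hcongr : (∫ t in (0:ℝ)..x, f t) = ∫ t in (0:ℝ)..x, a t * g (u 0) := by
      apply intervalIntegral.integral_congr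
      intro t ht
      rw [uIcc_of_le hx.1] at ht
      have ht' : t ∈ Icc (0:ℝ) T := ⟨ht.1, ht.2.trans hx.2⟩
      rw [hf_def]
      simp only
      rw [hu_const t ht']
    rw [hcongr, intervalIntegral.integral_mul_const] at hfx
    have hgc : 0 < g (u 0) := hGu_pos 0 h0T
    exact (mul_eq_zero.mp hfx).resolve_right (ne_of_gt hgc)
  exact ha0 (aux_ae_zero T hT.le a
    ((intervalIntegrable_iff_integrableOn_Ioc_of_le hT.le).mp ha) hfa)

/-- If `a ∈ L¹([0,T])` is not a.e. zero and `g` satisfies (g1) and is `C¹` on `(0,∞)`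
with `g' > 0` there, then the existence of a positive solution of
`u'' + a(x) g(u) = 0` with Neumann or periodic boundary conditions forces
`∫₀ᵀ a < 0`. -/
theorem statement_0
    (T : ℝ) (hT : 0 < T)
    (a : ℝ → ℝ) (ha : IntervalIntegrable a volume 0 T)
    (ha0 : ¬ (∀ᵐ x ∂(volume.restrict (Icc (0:ℝ) T)), a x = 0))
    (g g' : ℝ → ℝ) (hg1 : CondG1 g)
    (hgd : ∀ s : ℝ, 0 < s → HasDerivAt g (g' s) s)
    (hgdc : ContinuousOn g' (Ioi (0:ℝ)))
    (hgdpos : ∀ s : ℝ, 0 < s → 0 < g' s)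
    (hsol : PosSolNeumann T a g ∨ PosSolPeriodic T a g) :
    (∫ x in (0:ℝ)..T, a x) < 0 := by
  rcases hsol with ⟨u, u', hs, hp, h0, hT'⟩ | ⟨u, u', hs, hp, hu0T, hu'0T⟩
  · exact aux_key T hT a ha ha0 g g' hg1 hgd hgdc hgdpos u u' hs hp (by rw [h0, hT']; ring)
  · exact aux_key T hT a ha ha0 g g' hg1 hgd hgdc hgdpos u u' hs hp (by rw [hu0T, hu'0T])
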